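/- (Energy change of the 1D locally implicit ADER-DG scheme.) Consider the periodic 1D scheme with K ≥ 1 elements, CFL number ν ≥ 0, and previous-step data g_k, with predictors q̃_k and correctors q_k; assume additionally that each predictor matches the previous solution at the beginning of the time step, i.e. q̃_k(ξ, −1) = g_k(ξ) for all ξ ∈ ℝ. Set ψ_k := q_k − q̃_k. Then the energy change over one step satisfies ∑_{k} [∑_{i} w_i ½ q_k(ξ_i, 1)² − ∑_{i} w_i ½ g_k(ξ_i)²] = ∑_{k} [∑_{i} w_i ½ ψ_k(ξ_i, 1)² − ν ∑_{j} w_j ½ (q̃_{k−1}(1, ξ_j) − q̃_k(−1, ξ_j))²]; that is, the energy change equals the sum over elements of the discrete integral of half the squared predictor–corrector difference at the final time, minus ν times the discrete time-boundary integral of half the squared jump of the predictors across each element interface. -/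

import Mathlib

open BigOperators MvPolynomial

/-- Evaluation of a bivariate polynomial `Q` at the point `(x, t)`; variable `0` is the
space coordinate `ξ` and variable `1` is the time coordinate `τ`. -/
noncomputable def ev (Q : MvPolynomial (Fin 2) ℝ) (x t : ℝ) : ℝ :=
  MvPolynomial.eval ![x, t] Q

/-- `Vp p` is the space of real polynomial functions of `(ξ, τ)` of degree at most `p`
in each variable separately. -/
def Vp (p : ℕ) : Set (MvPolynomial (Fin 2) ℝ) :=
  {Q | Q.degreeOf 0 ≤ p ∧ Q.degreeOf 1 ≤ p}

/-- Discrete volume integral `⟨f⟩ = ∑ i j, w i * w j * f (ξ i) (ξ j)`. -/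
noncomputable def dVol {p : ℕ} (ξ w : Fin (p + 1) → ℝ) (f : ℝ → ℝ → ℝ) : ℝ :=
  ∑ i, ∑ j, w i * w j * f (ξ i) (ξ j)

/-- Discrete temporal-boundary integral `⟨f⟩_{τ=s} = ∑ i, w i * f (ξ i) s`. -/
noncomputable def dT {p : ℕ} (ξ w : Fin (p + 1) → ℝ) (f : ℝ → ℝ → ℝ) (s : ℝ) : ℝ :=
  ∑ i, w i * f (ξ i) s

/-- Discrete spatial-boundary integral `⟨f⟩_{ξ=s} = ∑ j, w j * f s (ξ j)`. -/
noncomputable def dX {p : ℕ} (ξ w : Fin (p + 1) → ℝ) (f : ℝ → ℝ → ℝ) (s : ℝ) : ℝ :=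
  ∑ j, w j * f s (ξ j)

/-- `q̃ ∈ V_p` satisfies the predictor equation with data `g` (a univariate polynomial
in `ξ`) and CFL number `ν` if for every `φ ∈ V_p`:
`⟨φ·(∂q̃/∂τ + ν ∂q̃/∂ξ)⟩ + ⟨φ·(q̃ − g)⟩_{τ=−1} = 0`. -/
def PredictorEq {p : ℕ} (ξ w : Fin (p + 1) → ℝ) (ν : ℝ) (g : Polynomial ℝ)
    (qt : MvPolynomial (Fin 2) ℝ) : Prop :=
  ∀ φ ∈ Vp p,
    dVol ξ w (fun x t => ev φ x t *
        (ev (pderiv 1 qt) x t + ν * ev (pderiv 0 qt) x t)) +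
      dT ξ w (fun x t => ev φ x t * (ev qt x t - g.eval x)) (-1) = 0

/-- `q ∈ V_p` satisfies the corrector equation with data `g` (a univariate polynomial
in `ξ`), left-flux trace `a` and right-flux trace `b` (univariate polynomials in `τ`)
and CFL number `ν` if for every `φ ∈ V_p`:
`⟨φ·(∂q/∂τ + ν ∂q/∂ξ)⟩ + ⟨φ·(q − g)⟩_{τ=−1} + ν ⟨φ·(b − q)⟩_{ξ=1} − ν ⟨φ·(a − q)⟩_{ξ=−1} = 0`. -/
def CorrectorEq {p : ℕ} (ξ w : Fin (p + 1) → ℝ) (ν : ℝ) (g a b : Polynomial ℝ)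
    (q : MvPolynomial (Fin 2) ℝ) : Prop :=
  ∀ φ ∈ Vp p,
    dVol ξ w (fun x t => ev φ x t *
        (ev (pderiv 1 q) x t + ν * ev (pderiv 0 q) x t)) +
      dT ξ w (fun x t => ev φ x t * (ev q x t - g.eval x)) (-1) +
      ν * dX ξ w (fun x t => ev φ x t * (b.eval t - ev q x t)) 1 -
      ν * dX ξ w (fun x t => ev φ x t * (a.eval t - ev q x t)) (-1) = 0

/-- The trace `τ ↦ Q(1, τ)` of a bivariate polynomial on the right spatial boundary
`ξ = 1`, as a univariate polynomial in `τ`. -/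
noncomputable def traceRight (Q : MvPolynomial (Fin 2) ℝ) : Polynomial ℝ :=
  MvPolynomial.eval₂ (Polynomial.C : ℝ →+* Polynomial ℝ) ![(1 : Polynomial ℝ), Polynomial.X] Q

/-- slice in τ at fixed ξ = x -/
noncomputable def secX (Q : MvPolynomial (Fin 2) ℝ) (x : ℝ) : Polynomial ℝ :=
  MvPolynomial.eval₂ Polynomial.C ![Polynomial.C x, Polynomial.X] Q

/-- slice in ξ at fixed τ = t -/
noncomputable def secT (Q : MvPolynomial (Fin 2) ℝ) (t : ℝ) : Polynomial ℝ :=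
  MvPolynomial.eval₂ Polynomial.C ![Polynomial.X, Polynomial.C t] Q

lemma secX_eval (Q : MvPolynomial (Fin 2) ℝ) (x t : ℝ) :
    (secX Q x).eval t = ev Q x t := by
  have h := MvPolynomial.eval₂_comp_left (Polynomial.evalRingHom t)
    (Polynomial.C : ℝ →+* Polynomial ℝ) ![Polynomial.C x, Polynomial.X] Q
  simp only [secX, ev, Polynomial.coe_evalRingHom] at h ⊢
  rw [h]
  rw [MvPolynomial.eval₂_eq, MvPolynomial.eval_eq]
  apply Finset.sum_congr rfl
  intro d _
  congr 1
  · simp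
  · apply Finset.prod_congr rfl
    intro i _
    fin_cases i <;> simp

lemma secT_eval (Q : MvPolynomial (Fin 2) ℝ) (x t : ℝ) :
    (secT Q t).eval x = ev Q x t := by
  have h := MvPolynomial.eval₂_comp_left (Polynomial.evalRingHom x)
    (Polynomial.C : ℝ →+* Polynomial ℝ) ![Polynomial.X, Polynomial.C t] Q
  simp only [secT, ev, Polynomial.coe_evalRingHom] at h ⊢
  rw [h]
  rw [MvPolynomial.eval₂_eq, MvPolynomial.eval_eq]
  apply Finset.sum_congr rfl
  intro d _
  congr 1
  · simp
  · apply Finset.prod_congr rfl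
    intro i _
    fin_cases i <;> simp

lemma secX_natDegree (Q : MvPolynomial (Fin 2) ℝ) (x : ℝ) :
    (secX Q x).natDegree ≤ Q.degreeOf 1 := by
  rw [secX, MvPolynomial.eval₂_eq']
  apply Polynomial.natDegree_sum_le_of_forall_le
  intro d hd
  have hle : d 1 ≤ Q.degreeOf 1 := by
    rw [MvPolynomial.degreeOf_eq_sup]
    exact Finset.le_sup (f := fun m => m 1) hd
  refine le_trans ?_ hle
  rw [Fin.prod_univ_two]
  simp only [Matrix.cons_val_zero, Matrix.cons_val_one, Matrix.head_cons]
  rw [show Polynomial.C (MvPolynomial.coeff d Q) * (Polynomial.C x ^ d 0 * Polynomial.X ^ d 1)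
      = Polynomial.C (MvPolynomial.coeff d Q * x ^ d 0) * Polynomial.X ^ d 1 from by
    rw [Polynomial.C_mul, Polynomial.C_pow]; ring]
  exact Polynomial.natDegree_C_mul_X_pow_le _ _

lemma secT_natDegree (Q : MvPolynomial (Fin 2) ℝ) (t : ℝ) :
    (secT Q t).natDegree ≤ Q.degreeOf 0 := by
  rw [secT, MvPolynomial.eval₂_eq']
  apply Polynomial.natDegree_sum_le_of_forall_le
  intro d hd
  have hle : d 0 ≤ Q.degreeOf 0 := by
    rw [MvPolynomial.degreeOf_eq_sup]
    exact Finset.le_sup (f := fun m => m 0) hd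
  refine le_trans ?_ hle
  rw [Fin.prod_univ_two]
  simp only [Matrix.cons_val_zero, Matrix.cons_val_one, Matrix.head_cons]
  rw [show Polynomial.C (MvPolynomial.coeff d Q) * (Polynomial.X ^ d 0 * Polynomial.C t ^ d 1)
      = Polynomial.C (MvPolynomial.coeff d Q * t ^ d 1) * Polynomial.X ^ d 0 from by
    rw [Polynomial.C_mul, Polynomial.C_pow]; ring]
  exact Polynomial.natDegree_C_mul_X_pow_le _ _

lemma secX_derivative (Q : MvPolynomial (Fin 2) ℝ) (x : ℝ) :
    Polynomial.derivative (secX Q x) = secX (pderiv 1 Q) x := by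
  induction Q using MvPolynomial.induction_on with
  | C a => simp [secX]
  | add P R hP hR => simp [secX, MvPolynomial.eval₂_add, map_add] at hP hR ⊢; rw [hP, hR]
  | mul_X P n hP =>
    have h1 : secX (P * X n) x = secX P x * ![Polynomial.C x, Polynomial.X] n := by
      rw [secX, MvPolynomial.eval₂_mul, MvPolynomial.eval₂_X]; rfl
    have h2 : secX ((pderiv 1) P * X n + P * (pderiv 1) (X n)) x
        = secX (pderiv 1 P) x * ![Polynomial.C x, Polynomial.X] n
          + secX P x * secX (pderiv 1 (X n)) x := by
      rw [secX, MvPolynomial.eval₂_add, MvPolynomial.eval₂_mul, MvPolynomial.eval₂_mul,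
        MvPolynomial.eval₂_X]; rfl
    rw [h1, Polynomial.derivative_mul, hP, pderiv_mul, h2]
    congr 1
    rw [MvPolynomial.pderiv_X]
    fin_cases n <;> simp [secX]

lemma secT_derivative (Q : MvPolynomial (Fin 2) ℝ) (t : ℝ) :
    Polynomial.derivative (secT Q t) = secT (pderiv 0 Q) t := by
  induction Q using MvPolynomial.induction_on with
  | C a => simp [secT]
  | add P R hP hR => simp [secT, MvPolynomial.eval₂_add, map_add] at hP hR ⊢; rw [hP, hR]
  | mul_X P n hP =>
    have h1 : secT (P * X n) t = secT P t * ![Polynomial.X, Polynomial.C t] n := by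
      rw [secT, MvPolynomial.eval₂_mul, MvPolynomial.eval₂_X]; rfl
    have h2 : secT ((pderiv 0) P * X n + P * (pderiv 0) (X n)) t
        = secT (pderiv 0 P) t * ![Polynomial.X, Polynomial.C t] n
          + secT P t * secT (pderiv 0 (X n)) t := by
      rw [secT, MvPolynomial.eval₂_add, MvPolynomial.eval₂_mul, MvPolynomial.eval₂_mul,
        MvPolynomial.eval₂_X]; rfl
    rw [h1, Polynomial.derivative_mul, hP, pderiv_mul, h2]
    congr 1
    rw [MvPolynomial.pderiv_X]
    fin_cases n <;> simp [secT]

section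
variable {p : ℕ} (ξ w : Fin (p + 1) → ℝ)

lemma quad_deriv (hp : 1 ≤ p)
    (hquad : ∀ f : Polynomial ℝ, f.natDegree ≤ 2 * p - 1 →
      ∑ i, w i * f.eval (ξ i) = ∫ x in (-1 : ℝ)..1, f.eval x)
    (r : Polynomial ℝ) (hr : r.natDegree ≤ p) :
    ∑ i, w i * (r.eval (ξ i) * (Polynomial.derivative r).eval (ξ i))
      = 1 / 2 * (r.eval 1) ^ 2 - 1 / 2 * (r.eval (-1)) ^ 2 := by
  have hdeg : (r * Polynomial.derivative r).natDegree ≤ 2 * p - 1 := by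
    refine le_trans Polynomial.natDegree_mul_le ?_
    have h2 := Polynomial.natDegree_derivative_le r
    omega
  have h := hquad (r * Polynomial.derivative r) hdeg
  simp only [Polynomial.eval_mul] at h
  rw [h]
  have hd : ∀ x ∈ Set.uIcc (-1 : ℝ) 1,
      HasDerivAt (fun y => 1 / 2 * (r.eval y) ^ 2)
        (r.eval x * (Polynomial.derivative r).eval x) x := by
    intro x _
    have h1 := ((r.hasDerivAt x).fun_pow 2).const_mul (1 / 2 : ℝ)
    refine h1.congr_deriv ?_
    ring_nf
  have hcont : IntervalIntegrable
      (fun x => r.eval x * (Polynomial.derivative r).eval x)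
      MeasureTheory.volume (-1 : ℝ) 1 :=
    (r.continuous_aeval.mul (Polynomial.derivative r).continuous_aeval).intervalIntegrable _ _
  exact intervalIntegral.integral_eq_sub_of_hasDerivAt hd hcont

lemma rowT (hp : 1 ≤ p)
    (hquad : ∀ f : Polynomial ℝ, f.natDegree ≤ 2 * p - 1 →
      ∑ i, w i * f.eval (ξ i) = ∫ x in (-1 : ℝ)..1, f.eval x)
    (Q : MvPolynomial (Fin 2) ℝ) (hQ : Q.degreeOf 1 ≤ p) (x : ℝ) :
    ∑ j, w j * (ev Q x (ξ j) * ev (pderiv 1 Q) x (ξ j))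
      = 1 / 2 * (ev Q x 1) ^ 2 - 1 / 2 * (ev Q x (-1)) ^ 2 := by
  have h := quad_deriv ξ w hp hquad (secX Q x) (le_trans (secX_natDegree Q x) hQ)
  rw [secX_derivative] at h
  simpa only [secX_eval] using h

lemma rowX (hp : 1 ≤ p)
    (hquad : ∀ f : Polynomial ℝ, f.natDegree ≤ 2 * p - 1 →
      ∑ i, w i * f.eval (ξ i) = ∫ x in (-1 : ℝ)..1, f.eval x)
    (Q : MvPolynomial (Fin 2) ℝ) (hQ : Q.degreeOf 0 ≤ p) (t : ℝ) :
    ∑ i, w i * (ev Q (ξ i) t * ev (pderiv 0 Q) (ξ i) t)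
      = 1 / 2 * (ev Q 1 t) ^ 2 - 1 / 2 * (ev Q (-1) t) ^ 2 := by
  have h := quad_deriv ξ w hp hquad (secT Q t) (le_trans (secT_natDegree Q t) hQ)
  rw [secT_derivative] at h
  simpa only [secT_eval] using h

end

section
variable {p : ℕ} (ξ w : Fin (p + 1) → ℝ)

lemma VOL (hp : 1 ≤ p)
    (hquad : ∀ f : Polynomial ℝ, f.natDegree ≤ 2 * p - 1 →
      ∑ i, w i * f.eval (ξ i) = ∫ x in (-1 : ℝ)..1, f.eval x)
    (ν : ℝ) (Q : MvPolynomial (Fin 2) ℝ) (hQ : Q ∈ Vp p) :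
    dVol ξ w (fun x t => ev Q x t * (ev (pderiv 1 Q) x t + ν * ev (pderiv 0 Q) x t))
      = ∑ i, w i * (1 / 2 * (ev Q (ξ i) 1) ^ 2 - 1 / 2 * (ev Q (ξ i) (-1)) ^ 2)
        + ν * ∑ j, w j * (1 / 2 * (ev Q 1 (ξ j)) ^ 2 - 1 / 2 * (ev Q (-1) (ξ j)) ^ 2) := by
  obtain ⟨h0, h1⟩ := hQ
  unfold dVol
  calc ∑ i, ∑ j, w i * w j *
        (ev Q (ξ i) (ξ j) * (ev (pderiv 1 Q) (ξ i) (ξ j) + ν * ev (pderiv 0 Q) (ξ i) (ξ j)))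
      = ∑ i, ∑ j, (w i * (w j * (ev Q (ξ i) (ξ j) * ev (pderiv 1 Q) (ξ i) (ξ j)))
          + ν * (w j * (w i * (ev Q (ξ i) (ξ j) * ev (pderiv 0 Q) (ξ i) (ξ j))))) :=
        Finset.sum_congr rfl fun i _ => Finset.sum_congr rfl fun j _ => by ring
    _ = (∑ i, ∑ j, w i * (w j * (ev Q (ξ i) (ξ j) * ev (pderiv 1 Q) (ξ i) (ξ j))))
          + ∑ i, ∑ j, ν * (w j * (w i * (ev Q (ξ i) (ξ j) * ev (pderiv 0 Q) (ξ i) (ξ j)))) := by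
        rw [← Finset.sum_add_distrib]
        exact Finset.sum_congr rfl fun i _ => Finset.sum_add_distrib
    _ = (∑ i, w i * ∑ j, w j * (ev Q (ξ i) (ξ j) * ev (pderiv 1 Q) (ξ i) (ξ j)))
          + ν * ∑ j, w j * ∑ i, w i * (ev Q (ξ i) (ξ j) * ev (pderiv 0 Q) (ξ i) (ξ j)) := by
        congr 1
        · exact Finset.sum_congr rfl fun i _ => (Finset.mul_sum _ _ _).symm
        · rw [Finset.sum_comm]
          simp only [Finset.mul_sum]

    _ = ∑ i, w i * (1 / 2 * (ev Q (ξ i) 1) ^ 2 - 1 / 2 * (ev Q (ξ i) (-1)) ^ 2)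
        + ν * ∑ j, w j * (1 / 2 * (ev Q 1 (ξ j)) ^ 2 - 1 / 2 * (ev Q (-1) (ξ j)) ^ 2) := by
        congr 1
        · exact Finset.sum_congr rfl fun i _ => by rw [rowT ξ w hp hquad Q h1 (ξ i)]
        · congr 1
          exact Finset.sum_congr rfl fun j _ => by rw [rowX ξ w hp hquad Q h0 (ξ j)]

lemma traceRight_eval (Q : MvPolynomial (Fin 2) ℝ) (t : ℝ) :
    (traceRight Q).eval t = ev Q 1 t := by
  have h : ![(1 : Polynomial ℝ), Polynomial.X] = ![Polynomial.C 1, Polynomial.X] := by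
    funext i; fin_cases i <;> simp
  rw [traceRight, h]
  exact secX_eval Q 1 t

end

/-- Theorem 4.1: energy change of the 1D locally implicit ADER-DG
scheme.  Consider the periodic 1D scheme with `K ≥ 1` elements, CFL number `ν ≥ 0`,
previous-step data `g k`, predictors `q̃ k` (satisfying the predictor equation with data
`g k`) and correctors `q k` (satisfying the corrector equation with data `g k`,
left-flux trace `τ ↦ q̃ (k−1) (1, τ)` and right-flux trace `τ ↦ q̃ k (1, τ)`); assume
moreover that each predictor matches the previous solution at the beginning of the time
step: `q̃ k (ξ, −1) = g k (ξ)` for all `ξ`.  With `ψ k := q k − q̃ k`, the energy change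
over one step is
`∑ k [∑ i w i ½ (q k)(ξ i, 1)² − ∑ i w i ½ (g k)(ξ i)²]`
`= ∑ k [∑ i w i ½ (ψ k)(ξ i, 1)² − ν ∑ j w j ½ ((q̃ (k−1))(1, ξ j) − (q̃ k)(−1, ξ j))²]`. -/
theorem energy_change_one_step
    (p : ℕ) (hp : 1 ≤ p)
    (ξ w : Fin (p + 1) → ℝ)
    (hmono : StrictMono ξ)
    (hξ0 : ξ 0 = -1) (hξlast : ξ (Fin.last p) = 1)
    (hw : ∀ i, 0 < w i)
    (hquad : ∀ f : Polynomial ℝ, f.natDegree ≤ 2 * p - 1 →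
      ∑ i, w i * f.eval (ξ i) = ∫ x in (-1 : ℝ)..1, f.eval x)
    (K : ℕ) (hK : 1 ≤ K) [NeZero K]
    (ν : ℝ) (hν : 0 ≤ ν)
    (g : ZMod K → Polynomial ℝ) (hg : ∀ k, (g k).natDegree ≤ p)
    (qt : ZMod K → MvPolynomial (Fin 2) ℝ) (hqtV : ∀ k, qt k ∈ Vp p)
    (hpred : ∀ k, PredictorEq ξ w ν (g k) (qt k))
    (hinit : ∀ k, ∀ x : ℝ, ev (qt k) x (-1) = (g k).eval x)
    (q : ZMod K → MvPolynomial (Fin 2) ℝ) (hqV : ∀ k, q k ∈ Vp p)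
    (hcor : ∀ k, CorrectorEq ξ w ν (g k) (traceRight (qt (k - 1))) (traceRight (qt k)) (q k)) :
    ∑ k : ZMod K,
        (∑ i, w i * (1 / 2 * (ev (q k) (ξ i) 1) ^ 2) -
          ∑ i, w i * (1 / 2 * ((g k).eval (ξ i)) ^ 2))
      = ∑ k : ZMod K,
          (∑ i, w i * (1 / 2 * (ev (q k - qt k) (ξ i) 1) ^ 2) -
            ν * ∑ j, w j *
              (1 / 2 * (ev (qt (k - 1)) 1 (ξ j) - ev (qt k) (-1) (ξ j)) ^ 2)) := by
  have key : ∀ k : ZMod K,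
      (∑ i, w i * (1 / 2 * (ev (q k) (ξ i) 1) ^ 2) -
        ∑ i, w i * (1 / 2 * ((g k).eval (ξ i)) ^ 2))
      = (∑ i, w i * (1 / 2 * (ev (q k - qt k) (ξ i) 1) ^ 2) -
          ν * ∑ j, w j *
            (1 / 2 * (ev (qt (k - 1)) 1 (ξ j) - ev (qt k) (-1) (ξ j)) ^ 2))
        + (ν * ∑ j, w j * (1 / 2 * (ev (qt (k - 1)) 1 (ξ j)) ^ 2)
           - ν * ∑ j, w j * (1 / 2 * (ev (qt k) 1 (ξ j)) ^ 2)) := by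
    intro k
    have hψV : q k - qt k ∈ Vp p :=
      ⟨le_trans (degreeOf_sub_le 0 _ _) (sup_le (hqV k).1 (hqtV k).1),
       le_trans (degreeOf_sub_le 1 _ _) (sup_le (hqV k).2 (hqtV k).2)⟩
    have evψ : ∀ x t : ℝ, ev (q k - qt k) x t = ev (q k) x t - ev (qt k) x t := by
      intro x t; simp [ev, map_sub]
    have evdψ1 : ∀ x t : ℝ, ev (pderiv 1 (q k - qt k)) x t
        = ev (pderiv 1 (q k)) x t - ev (pderiv 1 (qt k)) x t := by
      intro x t; simp [ev, map_sub]
    have evdψ0 : ∀ x t : ℝ, ev (pderiv 0 (q k - qt k)) x t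
        = ev (pderiv 0 (q k)) x t - ev (pderiv 0 (qt k)) x t := by
      intro x t; simp [ev, map_sub]
    -- corrector with φ = q k
    have EC := hcor k (q k) (hqV k)
    rw [VOL ξ w hp hquad ν (q k) (hqV k)] at EC
    simp only [dT, dX, traceRight_eval] at EC
    -- corrector and predictor with φ = ψ
    have ECψ := hcor k (q k - qt k) hψV
    have EPψ := hpred k (q k - qt k) hψV
    -- volume difference
    have hvol : dVol ξ w (fun x t => ev (q k - qt k) x t *
          (ev (pderiv 1 (q k)) x t + ν * ev (pderiv 0 (q k)) x t))
        - dVol ξ w (fun x t => ev (q k - qt k) x t *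
          (ev (pderiv 1 (qt k)) x t + ν * ev (pderiv 0 (qt k)) x t))
        = dVol ξ w (fun x t => ev (q k - qt k) x t *
          (ev (pderiv 1 (q k - qt k)) x t + ν * ev (pderiv 0 (q k - qt k)) x t)) := by
      simp only [dVol, ← Finset.sum_sub_distrib]
      refine Finset.sum_congr rfl fun i _ => Finset.sum_congr rfl fun j _ => ?_
      rw [evdψ1, evdψ0]; ring
    -- time-boundary difference
    have hT : dT ξ w (fun x t => ev (q k - qt k) x t * (ev (q k) x t - (g k).eval x)) (-1)
        - dT ξ w (fun x t => ev (q k - qt k) x t * (ev (qt k) x t - (g k).eval x)) (-1)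
        = dT ξ w (fun x t => ev (q k - qt k) x t * ev (q k - qt k) x t) (-1) := by
      simp only [dT, ← Finset.sum_sub_distrib]
      refine Finset.sum_congr rfl fun i _ => ?_
      rw [evψ]; ring
    have EqD : dVol ξ w (fun x t => ev (q k - qt k) x t *
          (ev (pderiv 1 (q k - qt k)) x t + ν * ev (pderiv 0 (q k - qt k)) x t))
        + dT ξ w (fun x t => ev (q k - qt k) x t * ev (q k - qt k) x t) (-1)
        + ν * dX ξ w (fun x t =>
            ev (q k - qt k) x t * ((traceRight (qt k)).eval t - ev (q k) x t)) 1
        - ν * dX ξ w (fun x t =>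
            ev (q k - qt k) x t * ((traceRight (qt (k - 1))).eval t - ev (q k) x t)) (-1)
        = 0 := by
      rw [← hvol, ← hT]; linarith [ECψ, EPψ]
    rw [VOL ξ w hp hquad ν (q k - qt k) hψV] at EqD
    simp only [dT, dX, traceRight_eval] at EqD
    simp only [evψ, evdψ1, evdψ0, hinit k] at EC EqD ⊢
    -- merged i-sum identity
    have hI : (∑ i, w i * (1 / 2 * (ev (q k) (ξ i) 1) ^ 2
            - 1 / 2 * (ev (q k) (ξ i) (-1)) ^ 2))
        + ∑ i, w i * (ev (q k) (ξ i) (-1) * (ev (q k) (ξ i) (-1) - (g k).eval (ξ i)))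
        - ((∑ i, w i * (1 / 2 * (ev (q k) (ξ i) 1 - ev (qt k) (ξ i) 1) ^ 2
            - 1 / 2 * (ev (q k) (ξ i) (-1) - (g k).eval (ξ i)) ^ 2))
          + ∑ i, w i * ((ev (q k) (ξ i) (-1) - (g k).eval (ξ i))
              * (ev (q k) (ξ i) (-1) - (g k).eval (ξ i))))
        = ∑ i, w i * (1 / 2 * (ev (q k) (ξ i) 1) ^ 2)
          - ∑ i, w i * (1 / 2 * ((g k).eval (ξ i)) ^ 2)
          - ∑ i, w i * (1 / 2 * (ev (q k) (ξ i) 1 - ev (qt k) (ξ i) 1) ^ 2) := by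
      simp only [← Finset.sum_sub_distrib, ← Finset.sum_add_distrib]
      exact Finset.sum_congr rfl fun i _ => by ring
    -- merged j-sum identity
    have hJ : (∑ j, w j * (1 / 2 * (ev (q k) 1 (ξ j)) ^ 2
            - 1 / 2 * (ev (q k) (-1) (ξ j)) ^ 2))
        + ∑ j, w j * (ev (q k) 1 (ξ j) * (ev (qt k) 1 (ξ j) - ev (q k) 1 (ξ j)))
        - ∑ j, w j * (ev (q k) (-1) (ξ j) * (ev (qt (k - 1)) 1 (ξ j) - ev (q k) (-1) (ξ j)))
        - ((∑ j, w j * (1 / 2 * (ev (q k) 1 (ξ j) - ev (qt k) 1 (ξ j)) ^ 2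
            - 1 / 2 * (ev (q k) (-1) (ξ j) - ev (qt k) (-1) (ξ j)) ^ 2))
          + ∑ j, w j * ((ev (q k) 1 (ξ j) - ev (qt k) 1 (ξ j))
              * (ev (qt k) 1 (ξ j) - ev (q k) 1 (ξ j)))
          - ∑ j, w j * ((ev (q k) (-1) (ξ j) - ev (qt k) (-1) (ξ j))
              * (ev (qt (k - 1)) 1 (ξ j) - ev (q k) (-1) (ξ j))))
        = ∑ j, w j * (1 / 2 * (ev (qt k) 1 (ξ j)) ^ 2)
          + ∑ j, w j * (1 / 2 * (ev (qt (k - 1)) 1 (ξ j) - ev (qt k) (-1) (ξ j)) ^ 2)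
          - ∑ j, w j * (1 / 2 * (ev (qt (k - 1)) 1 (ξ j)) ^ 2) := by
      simp only [← Finset.sum_sub_distrib, ← Finset.sum_add_distrib]
      exact Finset.sum_congr rfl fun j _ => by ring
    linear_combination EC - EqD - hI - ν * hJ
  calc ∑ k : ZMod K,
        (∑ i, w i * (1 / 2 * (ev (q k) (ξ i) 1) ^ 2) -
          ∑ i, w i * (1 / 2 * ((g k).eval (ξ i)) ^ 2))
      = ∑ k : ZMod K,
          ((∑ i, w i * (1 / 2 * (ev (q k - qt k) (ξ i) 1) ^ 2) -
            ν * ∑ j, w j *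
              (1 / 2 * (ev (qt (k - 1)) 1 (ξ j) - ev (qt k) (-1) (ξ j)) ^ 2))
            + (ν * ∑ j, w j * (1 / 2 * (ev (qt (k - 1)) 1 (ξ j)) ^ 2)
               - ν * ∑ j, w j * (1 / 2 * (ev (qt k) 1 (ξ j)) ^ 2))) :=
        Finset.sum_congr rfl fun k _ => key k
    _ = ∑ k : ZMod K,
          (∑ i, w i * (1 / 2 * (ev (q k - qt k) (ξ i) 1) ^ 2) -
            ν * ∑ j, w j *
              (1 / 2 * (ev (qt (k - 1)) 1 (ξ j) - ev (qt k) (-1) (ξ j)) ^ 2)) := by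
        rw [Finset.sum_add_distrib]
        have htel : ∑ k : ZMod K,
            (ν * ∑ j, w j * (1 / 2 * (ev (qt (k - 1)) 1 (ξ j)) ^ 2)
             - ν * ∑ j, w j * (1 / 2 * (ev (qt k) 1 (ξ j)) ^ 2)) = 0 := by
          rw [Finset.sum_sub_distrib]
          rw [show (∑ k : ZMod K, ν * ∑ j, w j * (1 / 2 * (ev (qt (k - 1)) 1 (ξ j)) ^ 2))
              = ∑ k : ZMod K, ν * ∑ j, w j * (1 / 2 * (ev (qt k) 1 (ξ j)) ^ 2) from
            Equiv.sum_comp (Equiv.subRight (1 : ZMod K))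
              (fun k => ν * ∑ j, w j * (1 / 2 * (ev (qt k) 1 (ξ j)) ^ 2))]
          ring
        rw [htel, add_zero]
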